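/- A nondecreasing sequence (c₁,…,cₙ) of positive integers is the fiber-size sequence |F⁻¹| of some associative quasitrivial operation F on Xₙ if and only if for every i, cᵢ = min{j : c_j = cᵢ} + max{j : c_j = cᵢ} − 1. -/

import Mathlib

def Assoc {X : Type*} (F : X → X → X) : Prop :=
  ∀ x y z, F (F x y) z = F x (F y z)

def Quasitrivial {X : Type*} (F : X → X → X) : Prop :=
  ∀ x y, F x y = x ∨ F x y = y

/-- The cardinality of the preimage `F⁻¹[z] = {(a,b) : F a b = z}`. -/
noncomputable def fiberCard {n : ℕ} (F : Fin n → Fin n → Fin n) (z : Fin n) : ℕ :=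
  Nat.card {p : Fin n × Fin n // F p.1 p.2 = z}

namespace AQT

variable {n : ℕ} (F : Fin n → Fin n → Fin n)

/-- the induced total preorder -/
def fle (x y : Fin n) : Prop := F x y = y ∨ F y x = y

instance (x y : Fin n) : Decidable (fle F x y) := by unfold fle; infer_instance

variable {F}

theorem F_self (hQ : Quasitrivial F) (x : Fin n) : F x x = x := by
  rcases hQ x x with h | h <;> exact h

theorem fle_refl (hQ : Quasitrivial F) (x : Fin n) : fle F x x := Or.inl (F_self hQ x)

theorem fle_total (hQ : Quasitrivial F) (x y : Fin n) : fle F x y ∨ fle F y x := by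
  rcases hQ x y with h | h
  · exact Or.inr (Or.inr h)
  · exact Or.inl (Or.inl h)

theorem not_fle (hQ : Quasitrivial F) {x y : Fin n} (h : ¬ fle F y x) :
    F x y = y ∧ F y x = y := by
  unfold fle at h
  push_neg at h
  constructor
  · rcases hQ x y with h' | h'
    · exact absurd h' h.2
    · exact h'
  · rcases hQ y x with h' | h'
    · exact h'
    · exact absurd h' h.1

theorem fle_trans (hA : Assoc F) (hQ : Quasitrivial F) {x y z : Fin n}
    (hxy : fle F x y) (hyz : fle F y z) : fle F x z := by
  rcases hxy with h1 | h1 <;> rcases hyz with h2 | h2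
  · -- F x y = y, F y z = z
    left
    calc F x z = F x (F y z) := by rw [h2]
      _ = F (F x y) z := (hA x y z).symm
      _ = z := by rw [h1, h2]
  · -- F x y = y, F z y = z
    by_cases h3 : F z x = z
    · exact Or.inr h3
    · rcases hQ z x with h4 | h4
      · exact absurd h4 h3
      · have hyz : y = z := by
          have := hA z x y
          rw [h4, h1, h2] at this
          exact this
        rw [hyz] at h1
        exact Or.inl h1
  · -- F y x = y, F y z = z
    by_cases h3 : F x z = z
    · exact Or.inl h3
    · rcases hQ x z with h4 | h4
      · have hzy : z = y := by
          have := hA y x z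
          rw [h1, h4, h1] at this
          rw [h2] at this
          exact this
        subst hzy
        exact Or.inr h1
      · exact absurd h4 h3
  · -- F y x = y, F z y = z
    by_cases h3 : F z x = z
    · exact Or.inr h3
    · rcases hQ z x with h4 | h4
      · exact absurd h4 h3
      · have hxz : x = z := by
          have := hA z y x
          rw [h2, h1, h4, h2] at this
          exact this
        exact hxz ▸ fle_refl hQ x

variable (F) in
def leSet (z : Fin n) : Finset (Fin n) := Finset.univ.filter (fun w => fle F w z)

variable (F) in
def ltSet (z : Fin n) : Finset (Fin n) :=
  Finset.univ.filter (fun w => fle F w z ∧ ¬ fle F z w)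

variable (F) in
def g (z : Fin n) : ℕ := (ltSet F z).card + (leSet F z).card

theorem fiberCard_eq_g (hQ : Quasitrivial F) (z : Fin n) : fiberCard F z = g F z := by
  classical
  have hfc : fiberCard F z
      = (Finset.univ.filter (fun p : Fin n × Fin n => F p.1 p.2 = z)).card := by
    rw [fiberCard, Nat.card_eq_fintype_card, Fintype.card_subtype]
  set A : Finset (Fin n) := Finset.univ.filter (fun y => F z y = z) with hA
  set B : Finset (Fin n) := Finset.univ.filter (fun x => F x z = z) with hB
  set A' : Finset (Fin n × Fin n) := A.image (fun y => (z, y)) with hA'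
  set B' : Finset (Fin n × Fin n) := B.image (fun x => (x, z)) with hB'
  have hS : Finset.univ.filter (fun p : Fin n × Fin n => F p.1 p.2 = z) = A' ∪ B' := by
    ext ⟨x, y⟩
    simp only [hA', hB', hA, hB, Finset.mem_filter, Finset.mem_univ, true_and,
      Finset.mem_union, Finset.mem_image, Prod.mk.injEq]
    constructor
    · intro h
      rcases hQ x y with h' | h'
      · have hx : x = z := by rw [← h, h']
        subst hx
        left; exact ⟨y, h, rfl, rfl⟩
      · have hy : y = z := by rw [← h, h']
        subst hy
        right; exact ⟨x, h, rfl, rfl⟩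
    · rintro (⟨w, hw, rfl, rfl⟩ | ⟨w, hw, rfl, rfl⟩) <;> exact hw
  have hIp : A' ∩ B' = {((z, z) : Fin n × Fin n)} := by
    ext ⟨x, y⟩
    simp only [hA', hB', hA, hB, Finset.mem_inter, Finset.mem_image, Finset.mem_filter,
      Finset.mem_univ, true_and, Finset.mem_singleton, Prod.mk.injEq]
    constructor
    · rintro ⟨⟨w, hw, rfl, rfl⟩, ⟨v, hv, rfl, rfl⟩⟩; exact ⟨rfl, rfl⟩
    · rintro ⟨rfl, rfl⟩
      exact ⟨⟨_, F_self hQ _, rfl, rfl⟩, ⟨_, F_self hQ _, rfl, rfl⟩⟩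
  have hcA' : A'.card = A.card := Finset.card_image_of_injective _ (fun a b h => (Prod.mk.injEq _ _ _ _ ▸ h).2)
  have hcB' : B'.card = B.card := Finset.card_image_of_injective _ (fun a b h => (Prod.mk.injEq _ _ _ _ ▸ h).1)
  have step1 : fiberCard F z + 1 = A.card + B.card := by
    have := Finset.card_union_add_card_inter A' B'
    rw [hIp, hcA', hcB'] at this
    simp only [Finset.card_singleton] at this
    rw [hfc, hS]
    exact this
  -- step 2
  have hU : A ∪ B = leSet F z := by
    ext w
    simp only [hA, hB, Finset.mem_union, Finset.mem_filter, Finset.mem_univ, true_and,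
      leSet, fle]
    exact ⟨fun h => Finset.mem_filter.mpr ⟨Finset.mem_univ _, by tauto⟩,
      fun h => by have := (Finset.mem_filter.mp h).2; tauto⟩
  have hI : A ∩ B = insert z (ltSet F z) := by
    ext w
    simp only [hA, hB, Finset.mem_inter, Finset.mem_filter, Finset.mem_univ, true_and,
      Finset.mem_insert, ltSet]
    constructor
    · rintro ⟨h1, h2⟩
      by_cases hw : w = z
      · exact Or.inl hw
      · refine Or.inr ⟨Or.inl h2, ?_⟩
        intro hzw
        rcases hzw with h | h
        · exact hw (by rw [← h1, h])
        · exact hw (by rw [← h2, h])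
    · rintro (rfl | ⟨h1, h2⟩)
      · exact ⟨F_self hQ _, F_self hQ _⟩
      · have := not_fle hQ h2
        exact ⟨this.2, this.1⟩
  have hznot : z ∉ ltSet F z := by
    simp only [ltSet, Finset.mem_filter, Finset.mem_univ, true_and]
    intro h
    exact h.2 (fle_refl hQ z)
  have step2 : A.card + B.card = (leSet F z).card + (ltSet F z).card + 1 := by
    have := Finset.card_union_add_card_inter A B
    rw [hU, hI, Finset.card_insert_of_notMem hznot] at this
    omega
  rw [g]
  omega

theorem ltSet_subset_leSet (z : Fin n) : ltSet F z ⊆ leSet F z := by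
  intro w hw
  simp only [ltSet, Finset.mem_filter] at hw
  simp only [leSet, Finset.mem_filter]
  exact ⟨hw.1, hw.2.1⟩

theorem leSet_subset_ltSet (hA : Assoc F) (hQ : Quasitrivial F) {w z : Fin n}
    (h : fle F w z) (h' : ¬ fle F z w) : leSet F w ⊆ ltSet F z := by
  intro v hv
  simp only [leSet, Finset.mem_filter] at hv
  simp only [ltSet, Finset.mem_filter, Finset.mem_univ, true_and]
  refine ⟨fle_trans hA hQ hv.2 h, fun hzv => h' (fle_trans hA hQ hzv hv.2)⟩

theorem mem_leSet_self (hQ : Quasitrivial F) (z : Fin n) : z ∈ leSet F z := by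
  simp only [leSet, Finset.mem_filter, Finset.mem_univ, true_and]
  exact fle_refl hQ z

theorem not_mem_ltSet_self (hQ : Quasitrivial F) (z : Fin n) : z ∉ ltSet F z := by
  simp only [ltSet, Finset.mem_filter, Finset.mem_univ, true_and]
  exact fun h => h.2 (fle_refl hQ z)

theorem ltSet_card_lt (hQ : Quasitrivial F) (z : Fin n) :
    (ltSet F z).card < (leSet F z).card :=
  Finset.card_lt_card ⟨ltSet_subset_leSet z,
    fun hsub => not_mem_ltSet_self hQ z (hsub (mem_leSet_self hQ z))⟩

theorem g_lt (hA : Assoc F) (hQ : Quasitrivial F) {w z : Fin n}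
    (h : fle F w z) (h' : ¬ fle F z w) : g F w < g F z := by
  have h1 : (leSet F w).card ≤ (ltSet F z).card :=
    Finset.card_le_card (leSet_subset_ltSet hA hQ h h')
  have h2 : (ltSet F w).card ≤ (leSet F w).card :=
    Finset.card_le_card (ltSet_subset_leSet w)
  have h3 := ltSet_card_lt hQ z
  simp only [g]
  omega

theorem g_eq (hA : Assoc F) (hQ : Quasitrivial F) {w z : Fin n}
    (h : fle F w z) (h' : fle F z w) : g F w = g F z := by
  have hle : leSet F w = leSet F z := by
    ext v
    simp only [leSet, Finset.mem_filter, Finset.mem_univ, true_and]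
    exact ⟨fun hv => fle_trans hA hQ hv h, fun hv => fle_trans hA hQ hv h'⟩
  have hlt : ltSet F w = ltSet F z := by
    ext v
    simp only [ltSet, Finset.mem_filter, Finset.mem_univ, true_and]
    constructor
    · rintro ⟨h1, h2⟩
      exact ⟨fle_trans hA hQ h1 h, fun h3 => h2 (fle_trans hA hQ h h3)⟩
    · rintro ⟨h1, h2⟩
      exact ⟨fle_trans hA hQ h1 h', fun h3 => h2 (fle_trans hA hQ h' h3)⟩
  simp only [g, hle, hlt]

theorem filter_g_lt (hA : Assoc F) (hQ : Quasitrivial F) (z : Fin n) :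
    Finset.univ.filter (fun w => g F w < g F z) = ltSet F z := by
  ext w
  simp only [Finset.mem_filter, Finset.mem_univ, true_and, ltSet]
  constructor
  · intro h
    rcases fle_total hQ w z with h1 | h1
    · by_cases h2 : fle F z w
      · exact absurd (g_eq hA hQ h1 h2) (Nat.ne_of_lt h)
      · exact ⟨h1, h2⟩
    · by_cases h2 : fle F w z
      · exact absurd (g_eq hA hQ h2 h1) (Nat.ne_of_lt h)
      · exact absurd (g_lt hA hQ h1 h2) (by omega)
  · rintro ⟨h1, h2⟩
    exact g_lt hA hQ h1 h2

theorem filter_g_le (hA : Assoc F) (hQ : Quasitrivial F) (z : Fin n) :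
    Finset.univ.filter (fun w => g F w ≤ g F z) = leSet F z := by
  ext w
  simp only [Finset.mem_filter, Finset.mem_univ, true_and, leSet]
  constructor
  · intro h
    rcases fle_total hQ w z with h1 | h1
    · exact h1
    · by_cases h2 : fle F w z
      · exact h2
      · exact absurd (g_lt hA hQ h1 h2) (by omega)
  · intro h1
    by_cases h2 : fle F z w
    · exact le_of_eq (g_eq hA hQ h1 h2)
    · exact le_of_lt (g_lt hA hQ h1 h2)

theorem fiberCard_key (hA : Assoc F) (hQ : Quasitrivial F) (z : Fin n) :
    fiberCard F z
      = (Finset.univ.filter (fun w => fiberCard F w < fiberCard F z)).card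
        + (Finset.univ.filter (fun w => fiberCard F w ≤ fiberCard F z)).card := by
  simp only [fiberCard_eq_g hQ]
  rw [filter_g_lt hA hQ, filter_g_le hA hQ, g]

end AQT

namespace AQT

variable {n : ℕ} {c : Fin n → ℕ}

theorem card_filter_lt (hmono : Monotone c) (i : Fin n)
    (hne : (Finset.univ.filter (fun j => c j = c i)).Nonempty) :
    (Finset.univ.filter (fun j => c j < c i)).card
      = (((Finset.univ.filter (fun j => c j = c i)).min' hne : Fin n) : ℕ) := by
  set m := (Finset.univ.filter (fun j => c j = c i)).min' hne with hm
  have hmem : c m = c i := (Finset.mem_filter.mp (Finset.min'_mem _ hne)).2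
  have : Finset.univ.filter (fun j => c j < c i) = Finset.Iio m := by
    ext j
    simp only [Finset.mem_filter, Finset.mem_univ, true_and, Finset.mem_Iio]
    constructor
    · intro h
      by_contra hj
      push_neg at hj
      have := hmono hj
      omega
    · intro h
      have h1 : c j ≤ c i := hmem ▸ hmono h.le
      rcases lt_or_eq_of_le h1 with h2 | h2
      · exact h2
      · exact absurd (Finset.min'_le _ j (by simp [h2])) (not_le.mpr h)
  rw [this, Fin.card_Iio]

theorem card_filter_le (hmono : Monotone c) (i : Fin n)
    (hne : (Finset.univ.filter (fun j => c j = c i)).Nonempty) :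
    (Finset.univ.filter (fun j => c j ≤ c i)).card
      = (((Finset.univ.filter (fun j => c j = c i)).max' hne : Fin n) : ℕ) + 1 := by
  set m := (Finset.univ.filter (fun j => c j = c i)).max' hne with hm
  have hmem : c m = c i := (Finset.mem_filter.mp (Finset.max'_mem _ hne)).2
  have : Finset.univ.filter (fun j => c j ≤ c i) = Finset.Iic m := by
    ext j
    simp only [Finset.mem_filter, Finset.mem_univ, true_and, Finset.mem_Iic]
    constructor
    · intro h
      by_contra hj
      push_neg at hj
      have h1 : c i ≤ c j := hmem ▸ hmono hj.le
      have h2 : c j = c i := le_antisymm h h1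
      exact absurd (Finset.le_max' _ j (by simp [h2])) (not_le.mpr hj)
    · intro h
      exact hmem ▸ hmono h
  rw [this, Fin.card_Iic]

variable (c) in
def cons : Fin n → Fin n → Fin n := fun x y => if c x < c y then y else x

theorem cons_assoc : Assoc (cons c) := by
  intro x y z
  unfold cons
  split_ifs <;> first | rfl | (exfalso; omega)

theorem cons_qt : Quasitrivial (cons c) := by
  intro x y
  unfold cons
  split_ifs
  · exact Or.inr rfl
  · exact Or.inl rfl

theorem cons_fiber
    (hP : ∀ i : Fin n, c i = (Finset.univ.filter (fun j => c j < c i)).card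
        + (Finset.univ.filter (fun j => c j ≤ c i)).card) (z : Fin n) :
    fiberCard (cons c) z = c z := by
  classical
  have hfc : fiberCard (cons c) z
      = (Finset.univ.filter (fun p : Fin n × Fin n => cons c p.1 p.2 = z)).card := by
    rw [fiberCard, Nat.card_eq_fintype_card, Fintype.card_subtype]
  set A' : Finset (Fin n × Fin n) :=
    (Finset.univ.filter (fun x => c x < c z)).image (fun x => (x, z)) with hA'
  set B' : Finset (Fin n × Fin n) :=
    (Finset.univ.filter (fun y => c y ≤ c z)).image (fun y => (z, y)) with hB'
  have hS : Finset.univ.filter (fun p : Fin n × Fin n => cons c p.1 p.2 = z) = A' ∪ B' := by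
    ext ⟨x, y⟩
    simp only [hA', hB', Finset.mem_filter, Finset.mem_univ, true_and, Finset.mem_union,
      Finset.mem_image, Prod.mk.injEq, cons]
    constructor
    · intro h
      replace h := (Finset.mem_filter.mp h).2
      dsimp only at h
      split_ifs at h with hc
      · subst h
        left
        exact ⟨x, hc, rfl, rfl⟩
      · subst h
        right
        exact ⟨y, not_lt.mp hc, rfl, rfl⟩
    · rintro (⟨w, hw, rfl, rfl⟩ | ⟨w, hw, rfl, rfl⟩)
      · exact Finset.mem_filter.mpr ⟨Finset.mem_univ _, if_pos hw⟩
      · exact Finset.mem_filter.mpr ⟨Finset.mem_univ _, if_neg (not_lt.mpr hw)⟩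
  have hdisj : Disjoint A' B' := by
    rw [Finset.disjoint_left]
    rintro ⟨x, y⟩ hx hy
    simp only [hA', hB', Finset.mem_image, Finset.mem_filter, Finset.mem_univ, true_and,
      Prod.mk.injEq] at hx hy
    obtain ⟨w, hw, rfl, rfl⟩ := hx
    obtain ⟨v, hv, hv1, hv2⟩ := hy
    subst hv1
    omega
  have hcA : A'.card = (Finset.univ.filter (fun x => c x < c z)).card :=
    Finset.card_image_of_injective _ (fun a b h => (Prod.mk.injEq _ _ _ _ ▸ h).1)
  have hcB : B'.card = (Finset.univ.filter (fun y => c y ≤ c z)).card :=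
    Finset.card_image_of_injective _ (fun a b h => (Prod.mk.injEq _ _ _ _ ▸ h).2)
  rw [hfc, hS, Finset.card_union_of_disjoint hdisj, hcA, hcB, ← hP z]

end AQT

theorem stmt_12 {n : ℕ} (c : Fin n → ℕ) (hmono : Monotone c) (hpos : ∀ i, 0 < c i) :
    (∃ F : Fin n → Fin n → Fin n, Assoc F ∧ Quasitrivial F ∧
        Finset.univ.val.map (fun z => fiberCard F z) = Finset.univ.val.map c) ↔
      ∀ i : Fin n,
        c i = (((Finset.univ.filter (fun j => c j = c i)).min' ⟨i, by simp⟩ : Fin n) : ℕ) + 1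
            + ((((Finset.univ.filter (fun j => c j = c i)).max' ⟨i, by simp⟩ : Fin n) : ℕ) + 1)
            - 1 := by
  classical
  have hne : ∀ i : Fin n, (Finset.univ.filter (fun j => c j = c i)).Nonempty :=
    fun i => ⟨i, by simp⟩
  have hiff : (∀ i : Fin n,
        c i = (((Finset.univ.filter (fun j => c j = c i)).min' (hne i) : Fin n) : ℕ) + 1
            + ((((Finset.univ.filter (fun j => c j = c i)).max' (hne i) : Fin n) : ℕ) + 1)
            - 1) ↔
      (∀ i : Fin n, c i = (Finset.univ.filter (fun j => c j < c i)).card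
        + (Finset.univ.filter (fun j => c j ≤ c i)).card) := by
    apply forall_congr'
    intro i
    rw [← AQT.card_filter_lt hmono i (hne i), ← AQT.card_filter_le hmono i (hne i)]
    omega
  rw [hiff]
  constructor
  · rintro ⟨F, hA, hQ, hmap⟩ i
    have hz : ∃ z : Fin n, fiberCard F z = c i := by
      have hmem : c i ∈ Finset.univ.val.map c :=
        Multiset.mem_map_of_mem _ (Finset.mem_univ i)
      rw [← hmap] at hmem
      obtain ⟨z, _, hz⟩ := Multiset.mem_map.mp hmem
      exact ⟨z, hz⟩
    obtain ⟨z, hz⟩ := hz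
    have key := AQT.fiberCard_key hA hQ z
    rw [hz] at key
    have hlt : (Finset.univ.filter (fun w => fiberCard F w < c i)).card
        = (Finset.univ.filter (fun j => c j < c i)).card := by
      have h2 := congrArg (Multiset.countP (fun v => v < c i)) hmap
      rw [Multiset.countP_map, Multiset.countP_map] at h2
      exact h2
    have hle : (Finset.univ.filter (fun w => fiberCard F w ≤ c i)).card
        = (Finset.univ.filter (fun j => c j ≤ c i)).card := by
      have h2 := congrArg (Multiset.countP (fun v => v ≤ c i)) hmap
      rw [Multiset.countP_map, Multiset.countP_map] at h2
      exact h2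
    rw [← hlt, ← hle]
    exact key
  · intro hP
    refine ⟨AQT.cons c, AQT.cons_assoc, AQT.cons_qt, ?_⟩
    exact Multiset.map_congr rfl (fun z _ => AQT.cons_fiber hP z)
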